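/- Let n ≥ 1 and 1 ≤ k ≤ n. Let I = (I_1,…,I_n) and U = (U_1,…,U_{n−k}) be vectors of positive reals. Then there exists a unique pair of real vectors I' = (I'_1,…,I'_n) and U' = (U'_1,…,U'_{n−k}) such that F_k(U')E(I) = E(I')F_k(U) as n×n real matrices; moreover all entries of I' and U' are positive. -/

import Mathlib

/-- Extend a vector `V : Fin m → ℝ` to `ℕ → ℝ` by zero. -/
def padded {m : ℕ} (V : Fin m → ℝ) : ℕ → ℝ :=
  fun t => if h : t < m then V ⟨t, h⟩ else 0

/-- The matrix E(I): diagonal entries I_i, entries 1 on the superdiagonal. -/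
def Ematrix (n : ℕ) (I : Fin n → ℝ) : Matrix (Fin n) (Fin n) ℝ :=
  Matrix.of fun r c =>
    if (c : ℕ) = (r : ℕ) then I r else if (c : ℕ) = (r : ℕ) + 1 then 1 else 0

/-- The matrix F_k(V) (1-indexed description: F_k(V)_{ii} = 1,
F_k(V)_{i+1,i} = −V_{i−k+1} for k ≤ i ≤ n−1, other entries 0). -/
def Fkmatrix (n k : ℕ) (V : Fin (n - k) → ℝ) : Matrix (Fin n) (Fin n) ℝ :=
  Matrix.of fun r c =>
    if (r : ℕ) = (c : ℕ) then 1
    else if (r : ℕ) = (c : ℕ) + 1 ∧ k ≤ (c : ℕ) + 1 then -(padded V ((c : ℕ) + 1 - k))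
    else 0

lemma padded_of_lt {m : ℕ} (V : Fin m → ℝ) {t : ℕ} (h : t < m) : padded V t = V ⟨t, h⟩ :=
  dif_pos h

lemma padded_of_ge {m : ℕ} (V : Fin m → ℝ) {t : ℕ} (h : m ≤ t) : padded V t = 0 :=
  dif_neg (by omega)

lemma padded_nonneg {m : ℕ} {V : Fin m → ℝ} (hV : ∀ i, 0 < V i) (t : ℕ) :
    0 ≤ padded V t := by
  unfold padded
  split
  · exact (hV _).le
  · exact le_refl 0

lemma E_apply_eq {n : ℕ} (I : Fin n → ℝ) {r c : Fin n} (h : (c : ℕ) = (r : ℕ)) :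
    Ematrix n I r c = I r := by simp [Ematrix, h]

lemma E_apply_succ {n : ℕ} (I : Fin n → ℝ) {r c : Fin n} (h : (c : ℕ) = (r : ℕ) + 1) :
    Ematrix n I r c = 1 := by
  simp only [Ematrix, Matrix.of_apply]
  rw [if_neg (by omega), if_pos h]

lemma E_apply_ne {n : ℕ} (I : Fin n → ℝ) {r c : Fin n} (h1 : (c : ℕ) ≠ (r : ℕ))
    (h2 : (c : ℕ) ≠ (r : ℕ) + 1) : Ematrix n I r c = 0 := by
  simp only [Ematrix, Matrix.of_apply]
  rw [if_neg h1, if_neg h2]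

lemma F_apply_eq {n k : ℕ} (V : Fin (n - k) → ℝ) {r c : Fin n} (h : (r : ℕ) = (c : ℕ)) :
    Fkmatrix n k V r c = 1 := by simp [Fkmatrix, h]

lemma F_apply_sub {n k : ℕ} (V : Fin (n - k) → ℝ) {r c : Fin n} (h : (r : ℕ) = (c : ℕ) + 1)
    (h2 : k ≤ (c : ℕ) + 1) : Fkmatrix n k V r c = -(padded V ((c : ℕ) + 1 - k)) := by
  simp only [Fkmatrix, Matrix.of_apply]
  rw [if_neg (by omega), if_pos ⟨h, h2⟩]

lemma F_apply_sub' {n k : ℕ} (V : Fin (n - k) → ℝ) {r c : Fin n} (h : (r : ℕ) = (c : ℕ) + 1)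
    (h2 : ¬ k ≤ (c : ℕ) + 1) : Fkmatrix n k V r c = 0 := by
  simp only [Fkmatrix, Matrix.of_apply]
  rw [if_neg (by omega), if_neg (by tauto)]

lemma F_apply_ne {n k : ℕ} (V : Fin (n - k) → ℝ) {r c : Fin n} (h1 : (r : ℕ) ≠ (c : ℕ))
    (h2 : (r : ℕ) ≠ (c : ℕ) + 1) : Fkmatrix n k V r c = 0 := by
  simp only [Fkmatrix, Matrix.of_apply]
  rw [if_neg h1, if_neg (by tauto)]

lemma FE_apply (n k : ℕ) (hk1 : 1 ≤ k) (V : Fin (n - k) → ℝ) (I : Fin n → ℝ) (r c : Fin n) :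
    (Fkmatrix n k V * Ematrix n I) r c =
      Ematrix n I r c +
        (if h : k ≤ (r : ℕ) then
          -(padded V ((r : ℕ) - k)) *
            Ematrix n I ⟨(r : ℕ) - 1, lt_of_le_of_lt (Nat.sub_le _ _) r.2⟩ c
        else 0) := by
  rw [Matrix.mul_apply]
  by_cases h : k ≤ (r : ℕ)
  · set p : Fin n := ⟨(r : ℕ) - 1, lt_of_le_of_lt (Nat.sub_le _ _) r.2⟩ with hp
    have hr1 : 1 ≤ (r : ℕ) := le_trans hk1 h
    have hpv : (p : ℕ) = (r : ℕ) - 1 := rfl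
    have hrp : r ≠ p := by
      intro he
      rw [he] at hpv
      omega
    rw [dif_pos h]
    rw [← Finset.sum_subset (Finset.subset_univ {r, p})]
    · rw [Finset.sum_pair hrp]
      congr 1
      · rw [F_apply_eq V rfl, one_mul]
      · have h1 : (r : ℕ) = (p : ℕ) + 1 := by omega
        rw [F_apply_sub V h1 (by omega)]
        congr 3
        omega
    · intro x _ hx
      simp only [Finset.mem_insert, Finset.mem_singleton] at hx
      push_neg at hx
      have hx1 : (r : ℕ) ≠ (x : ℕ) := fun hv => hx.1 (Fin.ext hv.symm)
      have hx2 : (r : ℕ) ≠ (x : ℕ) + 1 := by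
        intro hv
        exact hx.2 (Fin.ext (by omega))
      rw [F_apply_ne V hx1 hx2, zero_mul]
  · rw [dif_neg h, add_zero]
    rw [Finset.sum_eq_single r]
    · rw [F_apply_eq V rfl, one_mul]
    · intro b _ hb
      have hb1 : (r : ℕ) ≠ (b : ℕ) := fun hv => hb (Fin.ext hv.symm)
      by_cases hb2 : (r : ℕ) = (b : ℕ) + 1
      · rw [F_apply_sub' V hb2 (by omega), zero_mul]
      · rw [F_apply_ne V hb1 hb2, zero_mul]
    · intro hr; exact absurd (Finset.mem_univ r) hr

lemma EF_apply (n k : ℕ) (W : Fin (n - k) → ℝ) (J : Fin n → ℝ) (r c : Fin n) :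
    (Ematrix n J * Fkmatrix n k W) r c =
      J r * Fkmatrix n k W r c +
        (if h : (r : ℕ) + 1 < n then Fkmatrix n k W ⟨(r : ℕ) + 1, h⟩ c else 0) := by
  rw [Matrix.mul_apply]
  by_cases h : (r : ℕ) + 1 < n
  · set s : Fin n := ⟨(r : ℕ) + 1, h⟩ with hs
    have hsv : (s : ℕ) = (r : ℕ) + 1 := rfl
    have hrs : r ≠ s := by
      intro he
      rw [he] at hsv
      omega
    rw [dif_pos h]
    rw [← Finset.sum_subset (Finset.subset_univ {r, s})]
    · rw [Finset.sum_pair hrs]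
      congr 1
      · rw [E_apply_eq J rfl]
      · rw [E_apply_succ J hsv, one_mul]
    · intro x _ hx
      simp only [Finset.mem_insert, Finset.mem_singleton] at hx
      push_neg at hx
      have hx1 : (x : ℕ) ≠ (r : ℕ) := fun hv => hx.1 (Fin.ext hv)
      have hx2 : (x : ℕ) ≠ (r : ℕ) + 1 := fun hv => hx.2 (Fin.ext (by omega))
      rw [E_apply_ne J hx1 hx2, zero_mul]
  · rw [dif_neg h, add_zero]
    rw [Finset.sum_eq_single r]
    · rw [E_apply_eq J rfl]
    · intro b _ hb
      have hb1 : (b : ℕ) ≠ (r : ℕ) := fun hv => hb (Fin.ext hv)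
      have hb2 : (b : ℕ) ≠ (r : ℕ) + 1 := by
        intro hv
        have := b.2
        omega
      rw [E_apply_ne J hb1 hb2, zero_mul]
    · intro hr; exact absurd (Finset.mem_univ r) hr

lemma diag_of_eq (n k : ℕ) (hk1 : 1 ≤ k) (I J : Fin n → ℝ) (U V : Fin (n - k) → ℝ)
    (H : Fkmatrix n k V * Ematrix n I = Ematrix n J * Fkmatrix n k U) (r : Fin n) :
    I r - (if k ≤ (r : ℕ) then padded V ((r : ℕ) - k) else 0)
      = J r - (if k ≤ (r : ℕ) + 1 then padded U ((r : ℕ) + 1 - k) else 0) := by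
  have h0 := congrFun (congrFun H r) r
  rw [FE_apply n k hk1, EF_apply, E_apply_eq I rfl, F_apply_eq U rfl, mul_one] at h0
  by_cases hk : k ≤ (r : ℕ)
  · rw [dif_pos hk] at h0
    rw [E_apply_succ I
      (show (r : ℕ) = ((⟨(r : ℕ) - 1, lt_of_le_of_lt (Nat.sub_le _ _) r.2⟩ : Fin n) : ℕ) + 1 by
        simp; omega), mul_one] at h0
    rw [if_pos hk, if_pos (by omega)]
    by_cases hn' : (r : ℕ) + 1 < n
    · rw [dif_pos hn'] at h0
      rw [F_apply_sub U rfl (by omega)] at h0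
      linarith
    · rw [dif_neg hn'] at h0
      rw [padded_of_ge U (by omega)]
      linarith
  · rw [dif_neg hk] at h0
    rw [if_neg hk]
    by_cases hk' : k ≤ (r : ℕ) + 1
    · rw [if_pos hk']
      by_cases hn' : (r : ℕ) + 1 < n
      · rw [dif_pos hn'] at h0
        rw [F_apply_sub U rfl (by omega)] at h0
        linarith
      · rw [dif_neg hn'] at h0
        rw [padded_of_ge U (by omega)]
        linarith
    · rw [if_neg hk']
      by_cases hn' : (r : ℕ) + 1 < n
      · rw [dif_pos hn'] at h0
        rw [F_apply_sub' U rfl (by omega)] at h0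
        linarith
      · rw [dif_neg hn'] at h0
        linarith

lemma sub_of_eq (n k : ℕ) (hk1 : 1 ≤ k) (I J : Fin n → ℝ) (U V : Fin (n - k) → ℝ)
    (H : Fkmatrix n k V * Ematrix n I = Ematrix n J * Fkmatrix n k U) (r : Fin n)
    (hk : k ≤ (r : ℕ)) :
    padded V ((r : ℕ) - k) * I ⟨(r : ℕ) - 1, lt_of_le_of_lt (Nat.sub_le _ _) r.2⟩
      = J r * padded U ((r : ℕ) - k) := by
  set p : Fin n := ⟨(r : ℕ) - 1, lt_of_le_of_lt (Nat.sub_le _ _) r.2⟩ with hp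
  have hpv : (p : ℕ) = (r : ℕ) - 1 := rfl
  have hr1 : 1 ≤ (r : ℕ) := le_trans hk1 hk
  have h0 := congrFun (congrFun H r) p
  rw [FE_apply n k hk1, EF_apply, dif_pos hk] at h0
  rw [E_apply_ne I (by omega) (by omega), E_apply_eq I rfl] at h0
  rw [F_apply_sub U (by omega) (by omega)] at h0
  rw [show ((p : ℕ) + 1 - k) = ((r : ℕ) - k) from by omega] at h0
  by_cases hn' : (r : ℕ) + 1 < n
  · rw [dif_pos hn'] at h0
    rw [F_apply_ne U (by simp; omega) (by simp; omega)] at h0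
    linarith
  · rw [dif_neg hn'] at h0
    linarith

lemma eq_of_conds (n k : ℕ) (hk1 : 1 ≤ k) (I J : Fin n → ℝ) (U V : Fin (n - k) → ℝ)
    (hd : ∀ r : Fin n,
      I r - (if k ≤ (r : ℕ) then padded V ((r : ℕ) - k) else 0)
        = J r - (if k ≤ (r : ℕ) + 1 then padded U ((r : ℕ) + 1 - k) else 0))
    (hs : ∀ r : Fin n, k ≤ (r : ℕ) →
      padded V ((r : ℕ) - k) * I ⟨(r : ℕ) - 1, lt_of_le_of_lt (Nat.sub_le _ _) r.2⟩
        = J r * padded U ((r : ℕ) - k)) :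
    Fkmatrix n k V * Ematrix n I = Ematrix n J * Fkmatrix n k U := by
  ext r c
  rw [FE_apply n k hk1, EF_apply]
  by_cases hc1 : (c : ℕ) = (r : ℕ)
  · specialize hd r
    rw [E_apply_eq I hc1, F_apply_eq U hc1.symm, mul_one]
    by_cases hk : k ≤ (r : ℕ)
    · rw [dif_pos hk]
      rw [E_apply_succ I (show (c : ℕ) =
          ((⟨(r : ℕ) - 1, lt_of_le_of_lt (Nat.sub_le _ _) r.2⟩ : Fin n) : ℕ) + 1 by
        simp; omega), mul_one]
      rw [if_pos hk, if_pos (by omega)] at hd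
      by_cases hn' : (r : ℕ) + 1 < n
      · rw [dif_pos hn', F_apply_sub U (by simp; omega) (by omega)]
        rw [show ((c : ℕ) + 1 - k) = ((r : ℕ) + 1 - k) from by omega]
        linarith
      · rw [dif_neg hn']
        rw [padded_of_ge U (by omega)] at hd
        linarith
    · rw [dif_neg hk]
      rw [if_neg hk] at hd
      by_cases hk' : k ≤ (r : ℕ) + 1
      · rw [if_pos hk'] at hd
        by_cases hn' : (r : ℕ) + 1 < n
        · rw [dif_pos hn', F_apply_sub U (by simp; omega) (by omega)]
          rw [show ((c : ℕ) + 1 - k) = ((r : ℕ) + 1 - k) from by omega]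
          linarith
        · rw [dif_neg hn']
          rw [padded_of_ge U (by omega)] at hd
          linarith
      · rw [if_neg hk'] at hd
        by_cases hn' : (r : ℕ) + 1 < n
        · rw [dif_pos hn', F_apply_sub' U (by simp; omega) (by omega)]
          linarith
        · rw [dif_neg hn']
          linarith
  · by_cases hc2 : (c : ℕ) = (r : ℕ) + 1
    · rw [E_apply_succ I hc2, F_apply_ne U (by omega) (by omega), mul_zero]
      have hn' : (r : ℕ) + 1 < n := by have := c.2; omega
      rw [dif_pos hn', F_apply_eq U (by simp; omega)]
      by_cases hk : k ≤ (r : ℕ)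
      · rw [dif_pos hk, E_apply_ne I (by simp; omega) (by simp; omega)]
        ring
      · rw [dif_neg hk]
        ring
    · by_cases hc3 : (c : ℕ) + 1 = (r : ℕ)
      · rw [E_apply_ne I (by omega) (by omega)]
        by_cases hk : k ≤ (r : ℕ)
        · specialize hs r hk
          rw [dif_pos hk]
          rw [E_apply_eq I (show (c : ℕ) =
              ((⟨(r : ℕ) - 1, lt_of_le_of_lt (Nat.sub_le _ _) r.2⟩ : Fin n) : ℕ) by
            simp; omega)]
          rw [F_apply_sub U hc3.symm (by omega)]
          rw [show ((c : ℕ) + 1 - k) = ((r : ℕ) - k) from by omega]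
          by_cases hn' : (r : ℕ) + 1 < n
          · rw [dif_pos hn', F_apply_ne U (by simp; omega) (by simp; omega)]
            -- E at ⟨r-1⟩ vs hs's ⟨r-1⟩ : same
            linarith [hs]
          · rw [dif_neg hn']
            linarith [hs]
        · rw [dif_neg hk, F_apply_sub' U hc3.symm (by omega), mul_zero]
          by_cases hn' : (r : ℕ) + 1 < n
          · rw [dif_pos hn', F_apply_ne U (by simp; omega) (by simp; omega)]
          · rw [dif_neg hn']
      · rw [E_apply_ne I (by omega) (by omega), F_apply_ne U (by omega) (by omega), mul_zero]
        have hE2 : ∀ h : k ≤ (r : ℕ),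
            Ematrix n I ⟨(r : ℕ) - 1, lt_of_le_of_lt (Nat.sub_le _ _) r.2⟩ c = 0 := by
          intro h
          exact E_apply_ne I (by simp; omega) (by simp; omega)
        by_cases hk : k ≤ (r : ℕ)
        · rw [dif_pos hk, hE2 hk, mul_zero]
          by_cases hn' : (r : ℕ) + 1 < n
          · rw [dif_pos hn', F_apply_ne U (by simp; omega) (by simp; omega)]
          · rw [dif_neg hn']
        · rw [dif_neg hk]
          by_cases hn' : (r : ℕ) + 1 < n
          · rw [dif_pos hn', F_apply_ne U (by simp; omega) (by simp; omega)]
          · rw [dif_neg hn']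

noncomputable def Icand (n k : ℕ) (I : Fin n → ℝ) (U : Fin (n - k) → ℝ) : Fin n → ℝ := fun r =>
  if k ≤ (r : ℕ) then
    padded I ((r : ℕ) - 1) * (I r + padded U ((r : ℕ) + 1 - k)) /
      (padded I ((r : ℕ) - 1) + padded U ((r : ℕ) - k))
  else if (r : ℕ) + 1 = k then I r + padded U 0 else I r

noncomputable def Ucand (n k : ℕ) (I : Fin n → ℝ) (U : Fin (n - k) → ℝ) : Fin (n - k) → ℝ := fun j =>
  U j * (padded I ((j : ℕ) + k) + padded U ((j : ℕ) + 1)) /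
    (padded I ((j : ℕ) + k - 1) + U j)

lemma padded_Ucand (n k : ℕ) (I : Fin n → ℝ) (U : Fin (n - k) → ℝ) (r : Fin n)
    (hk : k ≤ (r : ℕ)) :
    padded (Ucand n k I U) ((r : ℕ) - k)
      = padded U ((r : ℕ) - k) * (I r + padded U ((r : ℕ) + 1 - k)) /
          (padded I ((r : ℕ) - 1) + padded U ((r : ℕ) - k)) := by
  have hlt : (r : ℕ) - k < n - k := by have := r.2; omega
  rw [padded_of_lt _ hlt]
  simp only [Ucand, Fin.val_mk]
  rw [show (r : ℕ) - k + k = (r : ℕ) from by omega,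
    show (r : ℕ) - k + 1 = (r : ℕ) + 1 - k from by omega]
  rw [padded_of_lt I r.2, Fin.eta]
  rw [← padded_of_lt U hlt]


/- STATEMENT 6: for positive vectors I (length n) and U (length n−k), there is a
unique pair (I', U') with F_k(U')E(I) = E(I')F_k(U), and its entries are positive. -/
theorem exists_unique_FkE_exchange (n k : ℕ) (hn : 1 ≤ n) (hk1 : 1 ≤ k) (hkn : k ≤ n)
    (I : Fin n → ℝ) (U : Fin (n - k) → ℝ)
    (hI : ∀ i, 0 < I i) (hU : ∀ i, 0 < U i) :
    ∃ (I' : Fin n → ℝ) (U' : Fin (n - k) → ℝ),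
      Fkmatrix n k U' * Ematrix n I = Ematrix n I' * Fkmatrix n k U ∧
      (∀ i, 0 < I' i) ∧ (∀ i, 0 < U' i) ∧
      ∀ (I'' : Fin n → ℝ) (U'' : Fin (n - k) → ℝ),
        Fkmatrix n k U'' * Ematrix n I = Ematrix n I'' * Fkmatrix n k U →
        I'' = I' ∧ U'' = U' := by
  have hIpad : ∀ t : ℕ, t < n → 0 < padded I t := by
    intro t ht
    rw [padded_of_lt I ht]
    exact hI _
  have hUpad : ∀ t : ℕ, t < n - k → 0 < padded U t := by
    intro t ht
    rw [padded_of_lt U ht]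
    exact hU _
  refine ⟨Icand n k I U, Ucand n k I U, ?_, ?_, ?_, ?_⟩
  · -- matrix equation
    apply eq_of_conds n k hk1 I (Icand n k I U) U (Ucand n k I U)
    · intro r
      by_cases hk : k ≤ (r : ℕ)
      · rw [if_pos hk, if_pos (by omega), padded_Ucand n k I U r hk]
        simp only [Icand, if_pos hk]
        have ha : 0 < padded I ((r : ℕ) - 1) :=
          hIpad _ (lt_of_le_of_lt (Nat.sub_le _ _) r.2)
        have hb : 0 < padded U ((r : ℕ) - k) := hUpad _ (by have := r.2; omega)
        have hab : padded I ((r : ℕ) - 1) + padded U ((r : ℕ) - k) ≠ 0 := by positivity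
        field_simp
        ring
      · rw [if_neg hk]
        simp only [Icand, if_neg hk]
        by_cases hk' : (r : ℕ) + 1 = k
        · rw [if_pos hk', if_pos (by omega), show (r : ℕ) + 1 - k = 0 from by omega]
          ring
        · rw [if_neg hk', if_neg (by omega)]
    · intro r hk
      rw [padded_Ucand n k I U r hk,
        ← padded_of_lt I (lt_of_le_of_lt (Nat.sub_le _ _) r.2)]
      simp only [Icand, if_pos hk]
      ring
  · -- positivity of Icand
    intro r
    unfold Icand
    by_cases hk : k ≤ (r : ℕ)
    · rw [if_pos hk]
      have ha : 0 < padded I ((r : ℕ) - 1) :=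
        hIpad _ (lt_of_le_of_lt (Nat.sub_le _ _) r.2)
      have hb : 0 < padded U ((r : ℕ) - k) := hUpad _ (by have := r.2; omega)
      have hu : 0 ≤ padded U ((r : ℕ) + 1 - k) := padded_nonneg hU _
      apply div_pos
      · apply mul_pos ha
        linarith [hI r]
      · linarith
    · rw [if_neg hk]
      by_cases hk' : (r : ℕ) + 1 = k
      · rw [if_pos hk']
        have := padded_nonneg hU 0
        linarith [hI r]
      · rw [if_neg hk']
        exact hI r
  · -- positivity of Ucand
    intro j
    unfold Ucand
    have h1 : 0 < padded I ((j : ℕ) + k) := hIpad _ (by have := j.2; omega)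
    have h2 : 0 < padded I ((j : ℕ) + k - 1) := hIpad _ (by have := j.2; omega)
    have h3 : 0 ≤ padded U ((j : ℕ) + 1) := padded_nonneg hU _
    apply div_pos
    · apply mul_pos (hU j)
      linarith
    · linarith [hU j]
  · -- uniqueness
    intro I'' U'' H
    have hd := diag_of_eq n k hk1 I I'' U U'' H
    have hs := sub_of_eq n k hk1 I I'' U U'' H
    have hIc : I'' = Icand n k I U := by
      funext r
      by_cases hk : k ≤ (r : ℕ)
      · have hdr := hd r
        rw [if_pos hk, if_pos (by omega)] at hdr
        have hsr := hs r hk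
        rw [← padded_of_lt I (lt_of_le_of_lt (Nat.sub_le _ _) r.2)] at hsr
        have ha : 0 < padded I ((r : ℕ) - 1) :=
          hIpad _ (lt_of_le_of_lt (Nat.sub_le _ _) r.2)
        have hb : 0 < padded U ((r : ℕ) - k) := hUpad _ (by have := r.2; omega)
        simp only [Icand, if_pos hk]
        set a := padded I ((r : ℕ) - 1)
        set b := padded U ((r : ℕ) - k)
        set u := padded U ((r : ℕ) + 1 - k)
        set v := padded U'' ((r : ℕ) - k)
        have key : I'' r + v = I r + u := by linarith
        have key2 : I'' r * (a + b) = a * (I r + u) := by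
          linear_combination a * key - hsr
        rw [eq_div_iff (by positivity)]
        linarith [key2]
      · have hdr := hd r
        rw [if_neg hk] at hdr
        simp only [Icand, if_neg hk]
        by_cases hk' : (r : ℕ) + 1 = k
        · rw [if_pos (show k ≤ (r : ℕ) + 1 by omega),
            show (r : ℕ) + 1 - k = 0 from by omega] at hdr
          rw [if_pos hk']
          linarith
        · rw [if_neg (by omega)] at hdr
          rw [if_neg hk']
          linarith
    refine ⟨hIc, ?_⟩
    funext j
    set r : Fin n := ⟨(j : ℕ) + k, by have := j.2; omega⟩ with hrdef
    have hrv : (r : ℕ) = (j : ℕ) + k := rfl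
    have hk : k ≤ (r : ℕ) := by omega
    have hsr := hs r hk
    rw [hIc] at hsr
    rw [show (r : ℕ) - k = (j : ℕ) from by omega] at hsr
    rw [padded_of_lt U'' j.2, Fin.eta, padded_of_lt U j.2, Fin.eta] at hsr
    rw [← padded_of_lt I (lt_of_le_of_lt (Nat.sub_le _ _) r.2)] at hsr
    simp only [Icand, if_pos hk] at hsr
    rw [show (r : ℕ) - 1 = (j : ℕ) + k - 1 from by omega,
      show (r : ℕ) + 1 - k = (j : ℕ) + 1 from by omega,
      show (r : ℕ) - k = (j : ℕ) from by omega] at hsr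
    have hx : I r = padded I ((j : ℕ) + k) := by
      rw [padded_of_lt I (by have := j.2; omega)]
    rw [hx, padded_of_lt U j.2, Fin.eta] at hsr
    simp only [Ucand]
    have ha : 0 < padded I ((j : ℕ) + k - 1) := hIpad _ (by have := j.2; omega)
    have h1 : 0 < padded I ((j : ℕ) + k) := hIpad _ (by have := j.2; omega)
    have h3 : 0 ≤ padded U ((j : ℕ) + 1) := padded_nonneg hU _
    have hbj : 0 < U j := hU j
    set a := padded I ((j : ℕ) + k - 1)
    set x := padded I ((j : ℕ) + k)
    set u := padded U ((j : ℕ) + 1)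
    rw [eq_div_iff (by positivity)]
    have hsr' : U'' j * a * (a + U j) = a * (x + u) * U j := by
      field_simp at hsr
      linear_combination a * hsr
    have := mul_left_cancel₀ (ne_of_gt ha) (show a * (U'' j * (a + U j)) = a * (U j * (x + u)) by
      linear_combination hsr')
    linarith [this]
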